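/- Let B : [0,1] → Sp(2n) be a piecewise positive path, i.e. B is continuous and there is a partition 0 = t₀ < t₁ < ⋯ < t_N = 1 such that the restriction of B to each subinterval [t_{i−1}, t_i] is a positive path. Then for every ε > 0 there exists a positive path A : [0,1] → Sp(2n) with ‖A(t) − B(t)‖ < ε for all t ∈ [0,1]; i.e. any piecewise positive path may be C⁰-approximated by a positive path. -/

import Mathlib

open Matrix Set

attribute [local instance] Matrix.normedAddCommGroup Matrix.normedSpace

/-- A positive path in `Sp(2n)` on the parameter set `s`: a differentiable path of
symplectic matrices whose derivative at each time `t ∈ s` is `J Pₜ A(t)` for some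
symmetric positive definite `Pₜ`. -/
def IsPosPath (n : ℕ) (s : Set ℝ) (A : ℝ → Matrix (Fin n ⊕ Fin n) (Fin n ⊕ Fin n) ℝ) : Prop :=
  ∀ t ∈ s, (A t)ᵀ * Matrix.J (Fin n) ℝ * A t = Matrix.J (Fin n) ℝ ∧
    ∃ P : Matrix (Fin n ⊕ Fin n) (Fin n ⊕ Fin n) ℝ, P.IsSymm ∧ P.PosDef ∧
      HasDerivWithinAt A (Matrix.J (Fin n) ℝ * P * A t) s t

namespace PPP

/-! ### Scalar bump machinery -/

lemma hasDerivAt_maxsq (v : ℝ) : HasDerivAt (fun v : ℝ => (max 0 v)^2) (2 * max 0 v) v := by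
  rcases lt_trichotomy v 0 with h | rfl | h
  · have he : (fun v : ℝ => (max 0 v)^2) =ᶠ[nhds v] (fun _ => (0:ℝ)) := by
      filter_upwards [Iio_mem_nhds h] with u hu
      simp [max_eq_left (le_of_lt (mem_Iio.mp hu))]
    have h0 : max 0 v = 0 := max_eq_left h.le
    have h2 : (2 : ℝ) * max 0 v = 0 := by rw [h0]; ring
    rw [h2]
    exact (hasDerivAt_const v 0).congr_of_eventuallyEq he
  · have key : (fun u : ℝ => (max 0 u)^2) =o[nhds 0] fun u : ℝ => u := by
      rw [Asymptotics.isLittleO_iff]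
      intro c hc
      filter_upwards [Metric.ball_mem_nhds (0:ℝ) hc] with u hu
      simp only [Metric.mem_ball, Real.dist_eq, sub_zero] at hu
      have h1 : |max 0 u| ≤ |u| := by
        rcases le_total u 0 with h' | h'
        · simp [max_eq_left h', abs_nonneg]
        · simp [max_eq_right h']
      calc ‖(max 0 u)^2‖ = |max 0 u| * |max 0 u| := by
            rw [Real.norm_eq_abs, sq, abs_mul]
        _ ≤ c * |u| := mul_le_mul (le_of_lt (lt_of_le_of_lt h1 hu)) h1 (abs_nonneg _) hc.le
        _ = c * ‖u‖ := by rw [Real.norm_eq_abs]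
    rw [hasDerivAt_iff_isLittleO]
    refine key.congr' (Filter.EventuallyEq.of_eq (funext fun u => ?_)) (by
      exact Filter.EventuallyEq.of_eq (funext fun u => by simp))
    simp
  · have he : (fun v : ℝ => (max 0 v)^2) =ᶠ[nhds v] (fun u => u^2) := by
      filter_upwards [Ioi_mem_nhds h] with u hu
      simp [max_eq_right (le_of_lt (mem_Ioi.mp hu))]
    have h0 : max 0 v = v := max_eq_right h.le
    have h2 : (2 : ℝ) * max 0 v = 2 * v := by rw [h0]
    rw [h2]
    exact (by simpa using hasDerivAt_pow 2 v :
      HasDerivAt (fun u : ℝ => u^2) (2*v) v).congr_of_eventuallyEq he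

noncomputable def bump (δ u : ℝ) : ℝ := u * (max 0 (1 - (u/δ)^2))^2

noncomputable def bump' (δ u : ℝ) : ℝ :=
  (max 0 (1 - (u/δ)^2))^2 - 4*u^2/δ^2 * max 0 (1 - (u/δ)^2)

lemma hasDerivAt_bump {δ : ℝ} (hδ : 0 < δ) (u : ℝ) :
    HasDerivAt (bump δ) (bump' δ u) u := by
  have hδ' : δ ≠ 0 := ne_of_gt hδ
  have hw : HasDerivAt (fun u : ℝ => 1 - (u/δ)^2) (-(2*u/δ^2)) u := by
    have h1 : HasDerivAt (fun u : ℝ => (u/δ)^2) (2*(u/δ)^1*(1/δ)) u :=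
      ((hasDerivAt_id u).div_const δ).pow 2
    have h2 := h1.const_sub 1
    have h3 : -(2*(u/δ)^1*(1/δ)) = -(2*u/δ^2) := by
      rw [pow_one]; field_simp
    rwa [h3] at h2
  have hq := (hasDerivAt_maxsq (1 - (u/δ)^2)).comp u hw
  have hm := (hasDerivAt_id u).mul hq
  have H : bump δ = fun y => id y *
      ((fun v : ℝ => (max 0 v)^2) ∘ (fun u : ℝ => 1 - (u/δ)^2)) y := rfl
  rw [H]
  have hval : bump' δ u = 1 * ((fun v : ℝ => (max 0 v)^2) ∘ (fun u : ℝ => 1 - (u/δ)^2)) u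
      + id u * (2 * max 0 (1 - (u/δ)^2) * -(2*u/δ^2)) := by
    simp only [Function.comp, id_eq, bump']
    ring
  rw [hval]
  exact hm

lemma max_nonneg' (δ u : ℝ) : 0 ≤ max 0 (1 - (u/δ)^2) := le_max_left _ _

lemma max_le_one' (δ u : ℝ) : max 0 (1 - (u/δ)^2) ≤ 1 := by
  apply max_le (by norm_num)
  nlinarith [sq_nonneg (u/δ)]

lemma max_eq_zero_of_far {δ u : ℝ} (hδ : 0 < δ) (h : δ ≤ |u|) :
    max 0 (1 - (u/δ)^2) = 0 := by
  apply max_eq_left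
  have h1 : 1 ≤ |u|/δ := (one_le_div hδ).mpr h
  have h2 : (u/δ)^2 = (|u|/δ)^2 := by rw [div_pow, div_pow, sq_abs]
  nlinarith

lemma bump_zero_of_far {δ u : ℝ} (hδ : 0 < δ) (h : δ ≤ |u|) : bump δ u = 0 := by
  simp [bump, max_eq_zero_of_far hδ h]

lemma bump'_zero_of_far {δ u : ℝ} (hδ : 0 < δ) (h : δ ≤ |u|) : bump' δ u = 0 := by
  simp [bump', max_eq_zero_of_far hδ h]

lemma bump'_le_one {δ : ℝ} (hδ : 0 < δ) (u : ℝ) : bump' δ u ≤ 1 := by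
  have h1 := max_nonneg' δ u
  have h2 := max_le_one' δ u
  have h3 : 0 ≤ 4*u^2/δ^2 := by positivity
  have : 4*u^2/δ^2 * max 0 (1 - (u/δ)^2) ≥ 0 := mul_nonneg h3 h1
  simp only [bump']
  nlinarith

lemma abs_bump_le_abs {δ : ℝ} (hδ : 0 < δ) (u : ℝ) : |bump δ u| ≤ |u| := by
  have h1 := max_nonneg' δ u
  have h2 := max_le_one' δ u
  rw [bump, abs_mul]
  calc |u| * |(max 0 (1 - (u/δ)^2))^2| ≤ |u| * 1 := by
        apply mul_le_mul_of_nonneg_left _ (abs_nonneg u)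
        rw [abs_of_nonneg (by positivity)]
        nlinarith
    _ = |u| := mul_one _

lemma abs_bump_le_delta {δ : ℝ} (hδ : 0 < δ) (u : ℝ) : |bump δ u| ≤ δ := by
  rcases le_or_gt δ |u| with h | h
  · rw [bump_zero_of_far hδ h]; simp [hδ.le]
  · exact (abs_bump_le_abs hδ u).trans h.le

lemma abs_sub_bump_le_abs {δ : ℝ} (hδ : 0 < δ) (u : ℝ) : |u - bump δ u| ≤ |u| := by
  have h1 := max_nonneg' δ u
  have h2 := max_le_one' δ u
  have : u - bump δ u = u * (1 - (max 0 (1 - (u/δ)^2))^2) := by rw [bump]; ring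
  rw [this, abs_mul]
  calc |u| * |1 - (max 0 (1 - (u/δ)^2))^2| ≤ |u| * 1 := by
        apply mul_le_mul_of_nonneg_left _ (abs_nonneg u)
        rw [abs_of_nonneg (by nlinarith)]
        nlinarith
    _ = |u| := mul_one _

lemma sub_bump_pos {δ u : ℝ} (hδ : 0 < δ) (hu : 0 < u) : 0 < u - bump δ u := by
  have h2 := max_le_one' δ u
  have h1 := max_nonneg' δ u
  have hlt : max 0 (1 - (u/δ)^2) < 1 := by
    rcases le_or_gt δ u with h | h
    · rw [max_eq_zero_of_far hδ (by rwa [abs_of_pos hu])]; norm_num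
    · have : 0 < (u/δ)^2 := by positivity
      have : 1 - (u/δ)^2 < 1 := by linarith
      exact max_lt (by norm_num) this
  have : u - bump δ u = u * (1 - (max 0 (1 - (u/δ)^2))^2) := by rw [bump]; ring
  rw [this]
  apply mul_pos hu
  nlinarith

lemma sub_bump_neg {δ u : ℝ} (hδ : 0 < δ) (hu : u < 0) : u - bump δ u < 0 := by
  have h2 := max_le_one' δ u
  have h1 := max_nonneg' δ u
  have hlt : max 0 (1 - (u/δ)^2) < 1 := by
    rcases le_or_gt δ (-u) with h | h
    · rw [max_eq_zero_of_far hδ (by rwa [abs_of_neg hu])]; norm_num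
    · have h0 : u/δ < 0 := div_neg_of_neg_of_pos hu hδ
      have : 0 < (u/δ)^2 := by nlinarith
      have : 1 - (u/δ)^2 < 1 := by linarith
      exact max_lt (by norm_num) this
  have : u - bump δ u = u * (1 - (max 0 (1 - (u/δ)^2))^2) := by rw [bump]; ring
  rw [this]
  apply mul_neg_of_neg_of_pos hu
  nlinarith

lemma sub_bump_cubic {δ u : ℝ} (hδ : 0 < δ) (h : |u| ≤ δ) :
    |u - bump δ u| ≤ 2 * |u|^3 / δ^2 := by
  have hx : (u/δ)^2 ≤ 1 := by
    have : (u/δ)^2 = (|u|/δ)^2 := by rw [div_pow, div_pow, sq_abs]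
    rw [this]
    have : |u|/δ ≤ 1 := (div_le_one hδ).mpr h
    nlinarith [abs_nonneg u, div_nonneg (abs_nonneg u) hδ.le]
  have hm : max 0 (1 - (u/δ)^2) = 1 - (u/δ)^2 := max_eq_right (by linarith)
  have heq : u - bump δ u = u * ((u/δ)^2 * (2 - (u/δ)^2)) := by
    rw [bump, hm]; ring
  rw [heq, abs_mul]
  have h1 : |(u/δ)^2 * (2 - (u/δ)^2)| ≤ 2 * (u/δ)^2 := by
    have h2 : 0 ≤ (u/δ)^2 := sq_nonneg _
    rw [abs_of_nonneg (by nlinarith)]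
    nlinarith
  calc |u| * |(u/δ)^2 * (2 - (u/δ)^2)| ≤ |u| * (2 * (u/δ)^2) :=
        mul_le_mul_of_nonneg_left h1 (abs_nonneg u)
    _ = 2 * |u|^3 / δ^2 := by
        have : (u/δ)^2 = |u|^2/δ^2 := by rw [div_pow, sq_abs]
        rw [this]; field_simp

/-! ### Reparametrization -/

noncomputable def reparam (δ : ℝ) (S : Finset ℝ) (s : ℝ) : ℝ :=
  s - ∑ c ∈ S, bump δ (s - c)

noncomputable def reparamD (δ : ℝ) (S : Finset ℝ) (s : ℝ) : ℝ :=
  1 - ∑ c ∈ S, bump' δ (s - c)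

variable {δ : ℝ} {S : Finset ℝ}

lemma hasDerivAt_reparam (hδ : 0 < δ) (s : ℝ) :
    HasDerivAt (reparam δ S) (reparamD δ S s) s := by
  have h1 : ∀ c ∈ S, HasDerivAt (fun s : ℝ => bump δ (s - c)) (bump' δ (s - c)) s := by
    intro c _
    have h := (hasDerivAt_bump hδ (s - c)).comp s ((hasDerivAt_id s).sub_const c)
    simpa [Function.comp_def] using h
  have hsum := HasDerivAt.fun_sum h1
  have h2 := (hasDerivAt_id' s).fun_sub hsum
  exact h2

def Sep (δ : ℝ) (S : Finset ℝ) : Prop :=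
  ∀ c ∈ S, ∀ c' ∈ S, c ≠ c' → 2*δ < |c - c'|

lemma near_unique (hsep : Sep δ S) {s c c' : ℝ} (hc : c ∈ S) (hc' : c' ∈ S)
    (h1 : |s - c| < δ) (h2 : |s - c'| < δ) : c = c' := by
  by_contra hne
  have := hsep c hc c' hc' hne
  have htri : |c - c'| ≤ |s - c| + |s - c'| := by
    calc |c - c'| = |(s - c') - (s - c)| := by ring_nf
      _ ≤ |s - c'| + |s - c| := abs_sub _ _
      _ = |s - c| + |s - c'| := by ring
  linarith

lemma sum_bump'_le_one (hδ : 0 < δ) (hsep : Sep δ S) (s : ℝ) :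
    ∑ c ∈ S, bump' δ (s - c) ≤ 1 := by
  by_cases hex : ∃ c₀ ∈ S, |s - c₀| < δ
  · obtain ⟨c₀, hc₀, hn⟩ := hex
    rw [Finset.sum_eq_single_of_mem c₀ hc₀ (fun b hb hne => bump'_zero_of_far hδ (by
      by_contra hlt
      push_neg at hlt
      exact hne (near_unique hsep hb hc₀ hlt hn)))]
    exact bump'_le_one hδ _
  · push_neg at hex
    rw [Finset.sum_eq_zero (fun c hc => bump'_zero_of_far hδ (hex c hc))]
    norm_num

lemma reparamD_nonneg (hδ : 0 < δ) (hsep : Sep δ S) (s : ℝ) : 0 ≤ reparamD δ S s := by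
  have := sum_bump'_le_one hδ hsep s
  simp only [reparamD]
  linarith

lemma reparam_far {s : ℝ} (hδ : 0 < δ) (h : ∀ c ∈ S, δ ≤ |s - c|) : reparam δ S s = s := by
  simp only [reparam]
  rw [Finset.sum_eq_zero (fun c hc => bump_zero_of_far hδ (h c hc))]
  ring

lemma reparam_near (hδ : 0 < δ) (hsep : Sep δ S) {s c₀ : ℝ} (hc₀ : c₀ ∈ S)
    (h : |s - c₀| < δ) : reparam δ S s = s - bump δ (s - c₀) := by
  simp only [reparam]
  rw [Finset.sum_eq_single_of_mem c₀ hc₀ (fun b hb hne => bump_zero_of_far hδ (by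
    by_contra hlt
    push_neg at hlt
    exact hne (near_unique hsep hb hc₀ hlt h)))]

lemma reparam_center (hδ : 0 < δ) (hsep : Sep δ S) {c₀ : ℝ} (hc₀ : c₀ ∈ S) :
    reparam δ S c₀ = c₀ := by
  rw [reparam_near hδ hsep hc₀ (by simpa using hδ)]
  have h0 : bump δ 0 = 0 := abs_eq_zero.mp
    (le_antisymm (by simpa using abs_bump_le_abs hδ 0) (abs_nonneg _))
  rw [sub_self, h0, sub_zero]

lemma abs_reparam_sub (hδ : 0 < δ) (hsep : Sep δ S) (s : ℝ) :
    |reparam δ S s - s| ≤ δ := by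
  by_cases hex : ∃ c₀ ∈ S, |s - c₀| < δ
  · obtain ⟨c₀, hc₀, hn⟩ := hex
    rw [reparam_near hδ hsep hc₀ hn]
    have := abs_bump_le_delta hδ (s - c₀)
    calc |s - bump δ (s - c₀) - s| = |bump δ (s - c₀)| := by rw [abs_sub_comm]; ring_nf
      _ ≤ δ := this
  · push_neg at hex
    rw [reparam_far hδ hex]
    simp [hδ.le]

lemma monotone_reparam (hδ : 0 < δ) (hsep : Sep δ S) : Monotone (reparam δ S) :=
  monotone_of_deriv_nonneg (fun s => (hasDerivAt_reparam hδ s).differentiableAt)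
    (fun s => by
      rw [(hasDerivAt_reparam hδ s).deriv]
      exact reparamD_nonneg hδ hsep s)

/-! ### Matrix rotation algebra -/

variable {n : ℕ}

local notation "Mx" => Matrix (Fin n ⊕ Fin n) (Fin n ⊕ Fin n) ℝ
local notation "Jm" => Matrix.J (Fin n) ℝ

noncomputable def Rot (n : ℕ) (θ : ℝ) : Matrix (Fin n ⊕ Fin n) (Fin n ⊕ Fin n) ℝ :=
  Real.cos θ • (1 : Matrix (Fin n ⊕ Fin n) (Fin n ⊕ Fin n) ℝ) + Real.sin θ • Matrix.J (Fin n) ℝ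

lemma Rot_transpose (θ : ℝ) : (Rot n θ)ᵀ = Real.cos θ • (1 : Mx) - Real.sin θ • Jm := by
  simp [Rot, transpose_add, transpose_smul, transpose_one, J_transpose, smul_neg,
    sub_eq_add_neg]

lemma Rot_mul (θ : ℝ) (M : Mx) :
    Rot n θ * M = Real.cos θ • M + Real.sin θ • (Jm * M) := by
  simp [Rot, Matrix.add_mul, Matrix.smul_mul, Matrix.one_mul]

lemma J_mul_Rot (θ : ℝ) : Jm * Rot n θ = Rot n θ * Jm := by
  simp only [Rot, Matrix.mul_add, Matrix.add_mul, Matrix.mul_smul, Matrix.smul_mul,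
    Matrix.mul_one, Matrix.one_mul]

lemma Rot_transpose_mul_self (θ : ℝ) : (Rot n θ)ᵀ * Rot n θ = 1 := by
  rw [Rot_transpose, Rot]
  simp only [Matrix.sub_mul, Matrix.add_mul, Matrix.mul_add, Matrix.smul_mul,
    Matrix.mul_smul, Matrix.one_mul, Matrix.mul_one, Matrix.neg_mul, Matrix.mul_neg,
    smul_neg, neg_smul, smul_smul, J_squared]
  have h := Real.sin_sq_add_cos_sq θ
  match_scalars <;> nlinarith [h]

lemma Rot_symplectic (θ : ℝ) : (Rot n θ)ᵀ * Jm * Rot n θ = Jm := by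
  rw [Rot_transpose, Rot]
  simp only [Matrix.sub_mul, Matrix.add_mul, Matrix.mul_add, Matrix.mul_sub, Matrix.smul_mul,
    Matrix.mul_smul, Matrix.one_mul, Matrix.mul_one, Matrix.neg_mul, Matrix.mul_neg,
    smul_neg, neg_smul, smul_smul, J_squared]
  have h := Real.sin_sq_add_cos_sq θ
  match_scalars <;> nlinarith [h]

lemma issymm_combo (a b : ℝ) {P : Mx} (Q : Mx) (hP : P.IsSymm) :
    (a • (1 : Mx) + b • (Q * P * Qᵀ)).IsSymm := by
  have hPt : Pᵀ = P := hP
  simp [Matrix.IsSymm, transpose_add, transpose_smul, transpose_one, Matrix.transpose_mul,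
    Matrix.transpose_transpose, hPt, Matrix.mul_assoc]

lemma dotProduct_self_pos {x : (Fin n ⊕ Fin n) → ℝ} (hx : x ≠ 0) : 0 < x ⬝ᵥ x := by
  rcases lt_or_eq_of_le (Finset.sum_nonneg (fun i _ => mul_self_nonneg (x i))) with h | h
  · exact h
  · exact absurd (dotProduct_self_eq_zero.mp h.symm) hx

lemma posdef_combo {a b : ℝ} (ha : 0 < a) (hb : 0 ≤ b) {P : Mx} (Q : Mx) (hP : P.PosDef) :
    (a • (1 : Mx) + b • (Q * P * Qᵀ)).PosDef := by
  have hpsd : (Q * P * Qᵀ).PosSemidef := by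
    have h := hP.posSemidef.mul_mul_conjTranspose_same Q
    rwa [conjTranspose_eq_transpose_of_trivial] at h
  rw [Matrix.posDef_iff_dotProduct_mulVec]
  constructor
  · have h1 : ((1 : Mx)).IsHermitian := isHermitian_one
    have h2 := hpsd.1
    simp only [Matrix.IsHermitian, conjTranspose_add, conjTranspose_smul, star_trivial]
    rw [h1.eq, h2.eq]
  · intro x hx
    have hx2 : 0 < x ⬝ᵥ x := dotProduct_self_pos hx
    have hq := hpsd.dotProduct_mulVec_nonneg x
    simp only [star_trivial] at hq ⊢
    simp only [add_mulVec, smul_mulVec, one_mulVec, dotProduct_add, dotProduct_smul,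
      smul_eq_mul]
    have : 0 ≤ b * (x ⬝ᵥ (Q * P * Qᵀ) *ᵥ x) := mul_nonneg hb hq
    nlinarith

lemma posdef_one : (1 : Mx).PosDef :=
  Matrix.posDef_iff_dotProduct_mulVec.mpr ⟨isHermitian_one, fun x hx => by
    simp only [one_mulVec, star_trivial]
    exact dotProduct_self_pos hx⟩

noncomputable def Lj (n : ℕ) :
    Matrix (Fin n ⊕ Fin n) (Fin n ⊕ Fin n) ℝ →L[ℝ] Matrix (Fin n ⊕ Fin n) (Fin n ⊕ Fin n) ℝ :=
  LinearMap.toContinuousLinearMap (LinearMap.mulLeft ℝ (Matrix.J (Fin n) ℝ))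

lemma Lj_apply (X : Mx) : Lj n X = Jm * X := rfl

/-! ### Assembly lemma -/

lemma assembly (η b t : ℝ) (hη : 0 < η) (hb : 0 ≤ b)
    (G : ℝ → Mx) (P₀ : Mx) (hP₀s : P₀.IsSymm) (hP₀ : P₀.PosDef)
    (hG : HasDerivWithinAt G (b • (Jm * P₀ * G t)) (Icc (0:ℝ) 1) t) :
    ∃ P : Mx, P.IsSymm ∧ P.PosDef ∧
      HasDerivWithinAt (fun u => Real.cos (η*u) • G u + Real.sin (η*u) • (Jm * G u))
        (Jm * P * (Real.cos (η*t) • G t + Real.sin (η*t) • (Jm * G t))) (Icc (0:ℝ) 1) t := by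
  refine ⟨η • (1 : Mx) + b • (Rot n (η*t) * P₀ * (Rot n (η*t))ᵀ),
    issymm_combo _ _ _ hP₀s, posdef_combo hη hb _ hP₀, ?_⟩
  have hc : HasDerivWithinAt (fun u : ℝ => Real.cos (η*u)) (-Real.sin (η*t) * (η*1))
      (Icc (0:ℝ) 1) t :=
    ((Real.hasDerivAt_cos (η*t)).comp t ((hasDerivAt_id t).const_mul η)).hasDerivWithinAt
  have hs : HasDerivWithinAt (fun u : ℝ => Real.sin (η*u)) (Real.cos (η*t) * (η*1))
      (Icc (0:ℝ) 1) t :=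
    ((Real.hasDerivAt_sin (η*t)).comp t ((hasDerivAt_id t).const_mul η)).hasDerivWithinAt
  have hJG : HasDerivWithinAt (fun u => Jm * G u) (Jm * (b • (Jm * P₀ * G t)))
      (Icc (0:ℝ) 1) t := (Lj n).hasFDerivAt.comp_hasDerivWithinAt t hG
  have hA' := (hc.smul hG).add (hs.smul hJG)
  have heq : Jm * (η • (1 : Mx) + b • (Rot n (η*t) * P₀ * (Rot n (η*t))ᵀ)) *
        (Real.cos (η*t) • G t + Real.sin (η*t) • (Jm * G t)) =
      (Real.cos (η*t) • (b • (Jm * P₀ * G t)) + (-Real.sin (η*t) * (η*1)) • G t) +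
      (Real.sin (η*t) • (Jm * (b • (Jm * P₀ * G t))) + (Real.cos (η*t) * (η*1)) • (Jm * G t)) := by
    have hAt : Real.cos (η*t) • G t + Real.sin (η*t) • (Jm * G t) = Rot n (η*t) * G t :=
      (Rot_mul _ _).symm
    have hJJ : ∀ X : Mx, Jm * (Jm * X) = -X := fun X => by
      rw [← Matrix.mul_assoc, J_squared, Matrix.neg_mul, Matrix.one_mul]
    have hJR : ∀ X : Mx, Jm * (Rot n (η*t) * X) = Rot n (η*t) * (Jm * X) := fun X => by
      rw [← Matrix.mul_assoc, J_mul_Rot, Matrix.mul_assoc]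
    have hRG : (Rot n (η*t))ᵀ * (Rot n (η*t) * G t) = G t := by
      rw [← Matrix.mul_assoc, Rot_transpose_mul_self, Matrix.one_mul]
    rw [hAt]
    rw [Matrix.mul_add, Matrix.add_mul]
    simp only [Matrix.mul_smul, Matrix.smul_mul, Matrix.mul_one, Matrix.mul_assoc]
    rw [hRG, hJR, hJR, Rot_mul, Rot_mul]
    simp only [smul_add, smul_smul, hJJ, smul_neg, Matrix.mul_smul]
    match_scalars <;> ring
  rw [heq]
  exact hA'

/-! ### Grid lemmas -/

lemma grid_gap {N : ℕ} {τ : Fin (N+1) → ℝ} (hτ : StrictMono τ) {g : ℝ}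
    (hg : ∀ i : Fin N, g ≤ τ i.succ - τ i.castSucc) {i j : Fin (N+1)} (hij : i < j) :
    g ≤ τ j - τ i := by
  have hiN : i.val < N := by
    have h1 : i.val < j.val := hij
    have h2 : j.val < N + 1 := j.isLt
    omega
  set i' : Fin N := ⟨i.val, hiN⟩ with hi'
  have h1 : i'.castSucc = i := by ext; simp [hi']
  have h2 : i'.succ ≤ j := by
    rw [Fin.le_def]
    have : i.val < j.val := hij
    simp [hi']
    omega
  have h3 : τ i'.succ ≤ τ j := hτ.monotone h2
  have h4 := hg i'
  rw [h1] at h4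
  linarith

lemma exists_piece {N : ℕ} (hN : 0 < N) {τ : Fin (N+1) → ℝ} (hτ : StrictMono τ)
    {x : ℝ} (hx0 : τ 0 ≤ x) (hx1 : x ≤ τ (Fin.last N)) :
    ∃ j : Fin N, x ∈ Icc (τ j.castSucc) (τ j.succ) := by
  classical
  set F := Finset.univ.filter (fun i : Fin (N+1) => τ i ≤ x) with hF
  have hne : F.Nonempty := ⟨0, by simp [hF, hx0]⟩
  set j₀ := F.max' hne with hj₀def
  have hj₀ : τ j₀ ≤ x := (Finset.mem_filter.mp (F.max'_mem hne)).2
  by_cases hlast : j₀.val = N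
  · have hxx : x = τ (Fin.last N) := by
      have : j₀ = Fin.last N := by ext; simpa using hlast
      exact le_antisymm hx1 (this ▸ hj₀)
    refine ⟨⟨N-1, by omega⟩, ?_, ?_⟩
    · refine le_trans ?_ hxx.ge
      apply hτ.monotone
      rw [Fin.le_def]
      simp [Fin.castSucc, Fin.last]
      all_goals omega
    · have hsucc : (⟨N-1, by omega⟩ : Fin N).succ = Fin.last N := by
        ext; simp [Fin.last]; omega
      rw [hsucc, hxx]
  · have hjN : j₀.val < N := by have := j₀.isLt; omega
    refine ⟨⟨j₀.val, hjN⟩, ?_, ?_⟩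
    · have : (⟨j₀.val, hjN⟩ : Fin N).castSucc = j₀ := by ext; simp
      rw [this]; exact hj₀
    · by_contra h
      push_neg at h
      have hmem : (⟨j₀.val, hjN⟩ : Fin N).succ ∈ F := by
        simp only [hF, Finset.mem_filter, Finset.mem_univ, true_and]
        exact h.le
      have := F.le_max' _ hmem
      rw [← hj₀def] at this
      rw [Fin.le_def] at this
      simp at this

lemma lipschitz_of_hasDerivWithinAt {E : Type*} [NormedAddCommGroup E] [NormedSpace ℝ E]
    {f : ℝ → E} {d : E} {s : Set ℝ} {x : ℝ} (h : HasDerivWithinAt f d s x) :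
    ∃ L, 0 ≤ L ∧ ∃ r > 0, ∀ v ∈ s, |v - x| < r → ‖f v - f x‖ ≤ L * |v - x| := by
  rw [hasDerivWithinAt_iff_isLittleO, Asymptotics.isLittleO_iff] at h
  have h1 := h (c := 1) one_pos
  rw [eventually_nhdsWithin_iff, Metric.eventually_nhds_iff] at h1
  obtain ⟨r, hr, hb⟩ := h1
  refine ⟨1 + ‖d‖, by positivity, r, hr, fun v hv hvr => ?_⟩
  have hkey := hb (y := v) (by rwa [Real.dist_eq]) hv
  have h2 : ‖f v - f x‖ ≤ ‖f v - f x - (v - x) • d‖ + ‖(v - x) • d‖ := by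
    calc ‖f v - f x‖ = ‖(f v - f x - (v-x) • d) + (v-x) • d‖ := by rw [sub_add_cancel]
      _ ≤ _ := norm_add_le _ _
  rw [norm_smul, Real.norm_eq_abs] at h2
  rw [Real.norm_eq_abs] at hkey
  nlinarith [abs_nonneg (v - x), norm_nonneg d]

end PPP

open PPP

set_option maxHeartbeats 1600000 in
/-- Any piecewise positive path may be `C⁰`-approximated by a positive path. -/
theorem stmt3 (n : ℕ) (B : ℝ → Matrix (Fin n ⊕ Fin n) (Fin n ⊕ Fin n) ℝ)
    (hBcont : ContinuousOn B (Icc (0 : ℝ) 1))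
    (N : ℕ) (hN : 0 < N) (τ : Fin (N + 1) → ℝ)
    (hτ0 : τ 0 = 0) (hτN : τ (Fin.last N) = 1) (hτmono : StrictMono τ)
    (hpiece : ∀ i : Fin N, IsPosPath n (Icc (τ i.castSucc) (τ i.succ)) B) :
    ∀ ε > (0 : ℝ), ∃ A : ℝ → Matrix (Fin n ⊕ Fin n) (Fin n ⊕ Fin n) ℝ,
      IsPosPath n (Icc (0 : ℝ) 1) A ∧ ∀ t ∈ Icc (0 : ℝ) 1, ‖A t - B t‖ < ε := by
  intro ε hε
  classical
  -- uniform bound on B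
  obtain ⟨C, hC⟩ := isCompact_Icc.exists_bound_of_continuousOn hBcont
  have hC0 : (0:ℝ) ≤ C := le_trans (norm_nonneg _) (hC 0 ⟨le_refl _, zero_le_one⟩)
  -- operator norm of J·
  set K := @Norm.norm _ ContinuousLinearMap.hasOpNorm (Lj n) with hKdef
  have hK0 : (0:ℝ) ≤ K := ContinuousLinearMap.opNorm_nonneg _
  have hKn : ∀ X : Matrix (Fin n ⊕ Fin n) (Fin n ⊕ Fin n) ℝ,
      ‖Matrix.J (Fin n) ℝ * X‖ ≤ K * ‖X‖ := fun X => by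
    have := (Lj n).le_opNorm X
    exact this
  -- uniform continuity of B
  have hBuc := isCompact_Icc.uniformContinuousOn_of_continuous hBcont
  replace hBuc := Metric.uniformContinuousOn_iff.mp hBuc
  obtain ⟨δ₁, hδ₁0, hBu⟩ := hBuc (ε/2) (by linarith)
  -- choice of η
  set Fc : ℝ → ℝ := fun θ => |Real.cos θ - 1| * C + |Real.sin θ| * (K * C) with hFcdef
  have hFcont : Continuous Fc :=
    ((continuous_abs.comp (Real.continuous_cos.sub continuous_const)).mul
      continuous_const).add ((continuous_abs.comp Real.continuous_sin).mul continuous_const)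
  have hFc0 : Fc 0 = 0 := by simp [hFcdef]
  have hevF : ∀ᶠ θ in nhds (0:ℝ), Fc θ < ε/2 := by
    have ht := hFcont.tendsto 0
    rw [hFc0] at ht
    exact ht.eventually_lt_const (by linarith)
  rw [Metric.eventually_nhds_iff] at hevF
  obtain ⟨η₀, hη₀0, hFcb⟩ := hevF
  set η := η₀/2 with hηdef
  have hη : 0 < η := by positivity
  -- minimal gap
  have hNe : (Finset.univ : Finset (Fin N)).Nonempty := ⟨⟨0, hN⟩, Finset.mem_univ _⟩
  set g := Finset.univ.inf' hNe (fun i : Fin N => τ i.succ - τ i.castSucc) with hgdef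
  have hgle : ∀ i : Fin N, g ≤ τ i.succ - τ i.castSucc := fun i =>
    Finset.inf'_le _ (Finset.mem_univ i)
  have hg0 : 0 < g := by
    rw [hgdef, Finset.lt_inf'_iff]
    intro i _
    have := hτmono (Fin.castSucc_lt_succ (i := i))
    linarith
  -- choice of δ
  set δ := min 1 (min (g/4) (δ₁/2)) with hδdef
  have hδ0 : 0 < δ := lt_min one_pos (lt_min (by linarith) (by linarith))
  have hδ1 : δ ≤ 1 := min_le_left _ _
  have hδg : δ ≤ g/4 := le_trans (min_le_right _ _) (min_le_left _ _)
  have hδδ₁ : δ ≤ δ₁/2 := le_trans (min_le_right _ _) (min_le_right _ _)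
  -- the centers
  set S := Finset.image τ Finset.univ with hSdef
  have hS : ∀ i : Fin (N+1), τ i ∈ S := fun i => Finset.mem_image_of_mem τ (Finset.mem_univ i)
  have hsep : Sep δ S := by
    intro c hc c' hc' hne
    obtain ⟨i, _, rfl⟩ := Finset.mem_image.mp hc
    obtain ⟨j, _, rfl⟩ := Finset.mem_image.mp hc'
    have hij : i ≠ j := fun h => hne (by rw [h])
    have habs : g ≤ |τ i - τ j| := by
      rcases hij.lt_or_gt with h | h
      · have hgg := grid_gap hτmono hgle h
        rw [abs_of_neg (by linarith)]
        linarith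
      · have hgg := grid_gap hτmono hgle h
        rw [abs_of_pos (by linarith)]
        linarith
    linarith
  -- reparametrization facts
  have hφ0 : reparam δ S 0 = 0 := reparam_center hδ0 hsep (hτ0 ▸ hS 0)
  have hφ1 : reparam δ S 1 = 1 := reparam_center hδ0 hsep (hτN ▸ hS (Fin.last N))
  have hφmono := monotone_reparam hδ0 hsep
  have hφmem : ∀ t ∈ Icc (0:ℝ) 1, reparam δ S t ∈ Icc (0:ℝ) 1 := fun t ht =>
    ⟨by calc (0:ℝ) = reparam δ S 0 := hφ0.symm
          _ ≤ reparam δ S t := hφmono ht.1,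
     by calc reparam δ S t ≤ reparam δ S 1 := hφmono ht.2
          _ = 1 := hφ1⟩
  refine ⟨fun u => Real.cos (η*u) • B (reparam δ S u) +
      Real.sin (η*u) • (Matrix.J (Fin n) ℝ * B (reparam δ S u)), fun t ht => ⟨?_, ?_⟩,
      fun t ht => ?_⟩
  · -- symplecticity
    obtain ⟨j, hj⟩ := exists_piece hN hτmono
      (show τ 0 ≤ reparam δ S t by rw [hτ0]; exact (hφmem t ht).1)
      (show reparam δ S t ≤ τ (Fin.last N) by rw [hτN]; exact (hφmem t ht).2)
    have hsymp := (hpiece j _ hj).1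
    have hsymp2 : ∀ X : Matrix (Fin n ⊕ Fin n) (Fin n ⊕ Fin n) ℝ,
        (Rot n (η*t))ᵀ * (Matrix.J (Fin n) ℝ * (Rot n (η*t) * X)) =
          Matrix.J (Fin n) ℝ * X := fun X => by
      rw [← Matrix.mul_assoc, ← Matrix.mul_assoc, Rot_symplectic]
    show (Real.cos (η*t) • B (reparam δ S t) +
        Real.sin (η*t) • (Matrix.J (Fin n) ℝ * B (reparam δ S t)))ᵀ * Matrix.J (Fin n) ℝ *
        (Real.cos (η*t) • B (reparam δ S t) +
        Real.sin (η*t) • (Matrix.J (Fin n) ℝ * B (reparam δ S t))) = Matrix.J (Fin n) ℝ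
    rw [← Rot_mul, Matrix.transpose_mul]
    simp only [Matrix.mul_assoc]
    rw [hsymp2, ← Matrix.mul_assoc]
    exact hsymp
  · -- the derivative condition
    by_cases htS : t ∈ S
    · -- t is a grid point
      obtain ⟨i, -, hit⟩ := Finset.mem_image.mp htS
      subst hit
      have hright : ∃ L, 0 ≤ L ∧ ∃ r > 0, ∀ v ∈ Icc (0:ℝ) 1, τ i ≤ v → |v - τ i| < r →
          ‖B v - B (τ i)‖ ≤ L * |v - τ i| := by
        by_cases hiN : i.val < N
        · set i' : Fin N := ⟨i.val, hiN⟩ with hi'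
          have hcs : i'.castSucc = i := by ext; simp [hi']
          have hlt := hτmono (Fin.castSucc_lt_succ (i := i'))
          have hcseq : τ i'.castSucc = τ i := congrArg τ hcs
          obtain ⟨-, P₁, -, -, hd⟩ := hpiece i' (τ i) ⟨le_of_eq hcseq, by linarith⟩
          obtain ⟨L, hL0, r, hr, hb⟩ := lipschitz_of_hasDerivWithinAt hd
          refine ⟨L, hL0, min r g, lt_min hr hg0, fun v hv hle hlt2 => ?_⟩
          have hvg : v - τ i < g := by
            have h8 := lt_of_lt_of_le hlt2 (min_le_right r g)
            rwa [abs_of_nonneg (by linarith)] at h8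
          have hgap := hgle i'
          exact hb v ⟨hcseq.le.trans hle, by linarith⟩ (lt_of_lt_of_le hlt2 (min_le_left _ _))
        · have hieq : τ i = 1 := by
            have h9 : i = Fin.last N := by ext; simp only [Fin.val_last]; omega
            rw [h9, hτN]
          refine ⟨0, le_refl _, 1, one_pos, fun v hv hle hlt2 => ?_⟩
          have hveq : v = τ i := le_antisymm (by rw [hieq]; exact hv.2) hle
          simp [hveq]
      have hleft : ∃ L, 0 ≤ L ∧ ∃ r > 0, ∀ v ∈ Icc (0:ℝ) 1, v ≤ τ i → |v - τ i| < r →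
          ‖B v - B (τ i)‖ ≤ L * |v - τ i| := by
        by_cases hi0 : 0 < i.val
        · set i' : Fin N := ⟨i.val - 1, by omega⟩ with hi'
          have hsc : i'.succ = i := by ext; simp [hi']; omega
          have hlt := hτmono (Fin.castSucc_lt_succ (i := i'))
          have hsceq : τ i'.succ = τ i := congrArg τ hsc
          obtain ⟨-, P₁, -, -, hd⟩ := hpiece i' (τ i) ⟨by linarith, hsceq.ge⟩
          obtain ⟨L, hL0, r, hr, hb⟩ := lipschitz_of_hasDerivWithinAt hd
          refine ⟨L, hL0, min r g, lt_min hr hg0, fun v hv hle hlt2 => ?_⟩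
          have hvg : τ i - v < g := by
            have h8 := lt_of_lt_of_le hlt2 (min_le_right r g)
            rwa [abs_of_nonpos (by linarith), neg_sub] at h8
          have hgap := hgle i'
          exact hb v ⟨by linarith, hle.trans hsceq.ge⟩ (lt_of_lt_of_le hlt2 (min_le_left _ _))
        · have hieq : τ i = 0 := by
            have h9 : i = 0 := by ext; simp only [Fin.val_zero]; omega
            rw [h9, hτ0]
          refine ⟨0, le_refl _, 1, one_pos, fun v hv hle hlt2 => ?_⟩
          have hveq : v = τ i := le_antisymm hle (by rw [hieq]; exact hv.1)
          simp [hveq]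
      obtain ⟨L₁, hL₁, r₁, hr₁, hb₁⟩ := hright
      obtain ⟨L₂, hL₂, r₂, hr₂, hb₂⟩ := hleft
      have hL0 : 0 ≤ max L₁ L₂ := le_trans hL₁ (le_max_left _ _)
      have hr0 : 0 < min r₁ r₂ := lt_min hr₁ hr₂
      have hb : ∀ v ∈ Icc (0:ℝ) 1, |v - τ i| < min r₁ r₂ →
          ‖B v - B (τ i)‖ ≤ max L₁ L₂ * |v - τ i| := by
        intro v hv hlt2
        rcases le_total (τ i) v with h | h
        · exact (hb₁ v hv h (lt_of_lt_of_le hlt2 (min_le_left _ _))).trans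
            (mul_le_mul_of_nonneg_right (le_max_left _ _) (abs_nonneg _))
        · exact (hb₂ v hv h (lt_of_lt_of_le hlt2 (min_le_right _ _))).trans
            (mul_le_mul_of_nonneg_right (le_max_right _ _) (abs_nonneg _))
      set L := max L₁ L₂
      set r := min r₁ r₂
      have hGc : reparam δ S (τ i) = τ i := reparam_center hδ0 hsep htS
      have hG0 : HasDerivWithinAt (fun u => B (reparam δ S u)) 0 (Icc (0:ℝ) 1) (τ i) := by
        refine hasDerivWithinAt_iff_isLittleO.mpr ?_
        rw [Asymptotics.isLittleO_iff]
        intro c hc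
        have hρ0 : 0 < min r (min δ (c*δ^2/(2*L+2))) := by
          refine lt_min hr0 (lt_min hδ0 ?_)
          positivity
        filter_upwards [mem_nhdsWithin_of_mem_nhds (Metric.ball_mem_nhds _ hρ0),
          self_mem_nhdsWithin] with u hu huI
        rw [Metric.mem_ball, Real.dist_eq] at hu
        have ha1 : |u - τ i| < r := lt_of_lt_of_le hu (min_le_left _ _)
        have haδ : |u - τ i| < δ :=
          lt_of_lt_of_le hu (le_trans (min_le_right _ _) (min_le_left _ _))
        have ha3 : |u - τ i| ≤ c*δ^2/(2*L+2) :=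
          le_of_lt (lt_of_lt_of_le hu (le_trans (min_le_right _ _) (min_le_right _ _)))
        have hrn : reparam δ S u = u - bump δ (u - τ i) := reparam_near hδ0 hsep htS haδ
        have hshift : u - bump δ (u - τ i) - τ i = (u - τ i) - bump δ (u - τ i) := by ring
        have hcu : |reparam δ S u - τ i| ≤ 2*|u - τ i|^3/δ^2 := by
          rw [hrn, hshift]
          exact sub_bump_cubic hδ0 haδ.le
        have hcr : |reparam δ S u - τ i| < r := by
          rw [hrn, hshift]
          exact lt_of_le_of_lt (abs_sub_bump_le_abs hδ0 _) ha1
        have hBb := hb (reparam δ S u) (hφmem u huI) hcr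
        simp only [smul_zero, sub_zero]
        rw [hGc]
        have ha0 : 0 ≤ |u - τ i| := abs_nonneg _
        have hkey : |u - τ i| * (2*L+2) ≤ c * δ^2 := by
          rw [← le_div_iff₀ (by linarith : (0:ℝ) < 2*L+2)]
          exact ha3
        have e2 : |u - τ i|^2 ≤ |u - τ i| := by nlinarith
        calc ‖B (reparam δ S u) - B (τ i)‖ ≤ L * |reparam δ S u - τ i| := hBb
          _ ≤ L * (2*|u - τ i|^3/δ^2) := mul_le_mul_of_nonneg_left hcu hL0
          _ ≤ c * |u - τ i| := by
              rw [show L * (2*|u - τ i|^3/δ^2) = 2*L*|u - τ i|^3/δ^2 from by ring,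
                div_le_iff₀ (by positivity : (0:ℝ) < δ^2)]
              nlinarith [mul_le_mul_of_nonneg_right hkey (sq_nonneg (|u - τ i|)),
                mul_le_mul_of_nonneg_right e2 (mul_nonneg hc.le (sq_nonneg δ))]
          _ = c * ‖u - τ i‖ := by rw [Real.norm_eq_abs]
      have hG0' : HasDerivWithinAt (fun u => B (reparam δ S u))
          ((0:ℝ) • (Matrix.J (Fin n) ℝ * 1 * B (reparam δ S (τ i)))) (Icc (0:ℝ) 1) (τ i) := by
        rw [zero_smul]; exact hG0
      exact assembly η 0 (τ i) hη (le_refl 0) (fun u => B (reparam δ S u)) 1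
        isSymm_one posdef_one hG0'
    · -- t is not a grid point
      have htnc : ∀ c ∈ S, t ≠ c := fun c hc he => htS (he ▸ hc)
      have hφne : ∀ c' ∈ S, reparam δ S t ≠ c' := by
        intro c' hc' heq
        by_cases hnear : ∃ c₀ ∈ S, |t - c₀| < δ
        · obtain ⟨c₀, hc₀, hn⟩ := hnear
          have hrn : reparam δ S t = t - bump δ (t - c₀) := reparam_near hδ0 hsep hc₀ hn
          have hne0 : reparam δ S t ≠ c₀ := by
            rcases (sub_ne_zero.mpr (htnc c₀ hc₀)).lt_or_gt with h | h
            · have h7 := sub_bump_neg hδ0 h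
              intro he
              rw [hrn] at he
              linarith [he.ge, he.le]
            · have h7 := sub_bump_pos hδ0 h
              intro he
              rw [hrn] at he
              linarith [he.ge, he.le]
          have hd0 : |reparam δ S t - c₀| < δ := by
            rw [hrn, show t - bump δ (t - c₀) - c₀ = (t - c₀) - bump δ (t - c₀) from by ring]
            exact lt_of_le_of_lt (abs_sub_bump_le_abs hδ0 _) hn
          by_cases hcc : c' = c₀
          · exact hne0 (hcc ▸ heq)
          · have h7 := hsep c' hc' c₀ hc₀ hcc
            rw [heq] at hd0
            linarith [hδ0]
        · push_neg at hnear
          have h7 : reparam δ S t = t := reparam_far hδ0 hnear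
          rw [h7] at heq
          exact htnc c' hc' heq
      obtain ⟨j, hj⟩ := exists_piece hN hτmono
        (show τ 0 ≤ reparam δ S t by rw [hτ0]; exact (hφmem t ht).1)
        (show reparam δ S t ≤ τ (Fin.last N) by rw [hτN]; exact (hφmem t ht).2)
      have h1 : τ j.castSucc < reparam δ S t :=
        lt_of_le_of_ne hj.1 (Ne.symm (hφne _ (hS j.castSucc)))
      have h2 : reparam δ S t < τ j.succ := lt_of_le_of_ne hj.2 (hφne _ (hS j.succ))
      obtain ⟨-, P₀, hs₀, hd₀, hder⟩ := hpiece j _ hj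
      have hdB : HasDerivAt B (Matrix.J (Fin n) ℝ * P₀ * B (reparam δ S t)) (reparam δ S t) :=
        hder.hasDerivAt (Icc_mem_nhds h1 h2)
      have hchain := hdB.scomp_hasDerivWithinAt (s := Icc (0:ℝ) 1) t (hasDerivAt_reparam hδ0 t).hasDerivWithinAt
      exact assembly η (reparamD δ S t) t hη (reparamD_nonneg hδ0 hsep t)
        (fun u => B (reparam δ S u)) P₀ hs₀ hd₀ hchain
  · -- closeness
    have hGt : ‖B (reparam δ S t)‖ ≤ C := hC _ (hφmem t ht)
    have hJGt : ‖Matrix.J (Fin n) ℝ * B (reparam δ S t)‖ ≤ K * C :=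
      le_trans (hKn _) (mul_le_mul_of_nonneg_left hGt hK0)
    have hsplit : Real.cos (η*t) • B (reparam δ S t) +
        Real.sin (η*t) • (Matrix.J (Fin n) ℝ * B (reparam δ S t)) - B t
        = ((Real.cos (η*t) - 1) • B (reparam δ S t) +
          Real.sin (η*t) • (Matrix.J (Fin n) ℝ * B (reparam δ S t))) +
          (B (reparam δ S t) - B t) := by
      rw [sub_smul, one_smul]; abel
    have hdist : ‖B (reparam δ S t) - B t‖ < ε/2 := by
      have h7 := hBu _ (hφmem t ht) t ht (by
        rw [Real.dist_eq]
        exact lt_of_le_of_lt (le_trans (abs_reparam_sub hδ0 hsep t) hδδ₁) (by linarith))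
      rwa [dist_eq_norm] at h7
    have hFb : Fc (η*t) < ε/2 := hFcb (by
      rw [Real.dist_eq, sub_zero]
      have h1t : |η*t| ≤ η := by
        rw [abs_mul, abs_of_pos hη]
        have h8 : |t| ≤ 1 := abs_le.mpr ⟨by linarith [ht.1], ht.2⟩
        nlinarith
      calc |η*t| ≤ η := h1t
        _ < η₀ := by rw [hηdef]; linarith)
    show ‖Real.cos (η*t) • B (reparam δ S t) +
        Real.sin (η*t) • (Matrix.J (Fin n) ℝ * B (reparam δ S t)) - B t‖ < ε
    rw [hsplit]
    calc ‖((Real.cos (η*t) - 1) • B (reparam δ S t) +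
          Real.sin (η*t) • (Matrix.J (Fin n) ℝ * B (reparam δ S t))) +
          (B (reparam δ S t) - B t)‖
        ≤ ‖(Real.cos (η*t) - 1) • B (reparam δ S t) +
          Real.sin (η*t) • (Matrix.J (Fin n) ℝ * B (reparam δ S t))‖ +
          ‖B (reparam δ S t) - B t‖ := norm_add_le _ _
      _ ≤ (‖(Real.cos (η*t) - 1) • B (reparam δ S t)‖ +
          ‖Real.sin (η*t) • (Matrix.J (Fin n) ℝ * B (reparam δ S t))‖) +
          ‖B (reparam δ S t) - B t‖ := add_le_add_left (norm_add_le _ _) _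
      _ ≤ (|Real.cos (η*t) - 1| * C + |Real.sin (η*t)| * (K * C)) +
          ‖B (reparam δ S t) - B t‖ := by
          refine add_le_add_left (add_le_add ?_ ?_) _
          · rw [norm_smul, Real.norm_eq_abs]
            exact mul_le_mul_of_nonneg_left hGt (abs_nonneg _)
          · rw [norm_smul, Real.norm_eq_abs]
            exact mul_le_mul_of_nonneg_left hJGt (abs_nonneg _)
      _ < ε/2 + ε/2 := add_lt_add_of_le_of_lt (le_of_lt hFb) hdist
      _ = ε := by ring
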